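/- Let 0 < γ ≤ 1 and p + q = 1 with 0 < q < 1/2. Then ∑_{n≥0} p(pq)^n C_n · (n + 1 − (1 − (1−γ)^{n+1})/γ) = q/(p−q) − ((1−γ)/γ)·(1 − p·C((1−γ)pq)), where C(x) = (1 − √(1−4x))/(2x). -/

import Mathlib

open Finset

lemma cat_le_four_pow (n : ℕ) : ((n:ℝ)+1) * (catalan n : ℝ) ≤ 4 ^ n := by
  have h1 : (n+1) * catalan n = Nat.centralBinom n := succ_mul_catalan_eq_centralBinom n
  have h2 : Nat.centralBinom n ≤ 4 ^ n := by
    calc Nat.centralBinom n = (2*n).choose n := Nat.centralBinom_eq_two_mul_choose n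
    _ ≤ (2*n+1).choose n := Nat.choose_le_choose n (Nat.le_succ _)
    _ ≤ 4 ^ n := Nat.choose_middle_le_pow n
  have := h1 ▸ h2
  exact_mod_cast this

lemma cat_le_four_pow' (n : ℕ) : (catalan n : ℝ) ≤ 4 ^ n := by
  have h := cat_le_four_pow n
  nlinarith [(Nat.cast_nonneg (catalan n) : (0:ℝ) ≤ _), (Nat.cast_nonneg n : (0:ℝ) ≤ _)]

lemma cat_summable {x : ℝ} (h0 : 0 ≤ x) (h : x < 1/4) :
    Summable (fun n => (catalan n : ℝ) * x ^ n) := by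
  have hg : Summable (fun n : ℕ => (4*x) ^ n) :=
    summable_geometric_of_lt_one (by linarith) (by linarith)
  refine Summable.of_nonneg_of_le (fun n => by positivity) (fun n => ?_) hg
  rw [mul_pow]
  have hx : (0:ℝ) ≤ x ^ n := by positivity
  exact mul_le_mul_of_nonneg_right (cat_le_four_pow' n) hx

lemma succ_cat_summable {x : ℝ} (h0 : 0 ≤ x) (h : x < 1/4) :
    Summable (fun n : ℕ => ((n:ℝ)+1) * (catalan n : ℝ) * x ^ n) := by
  have hg : Summable (fun n : ℕ => (4*x) ^ n) :=
    summable_geometric_of_lt_one (by linarith) (by linarith)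
  refine Summable.of_nonneg_of_le (fun n => by positivity) (fun n => ?_) hg
  rw [mul_pow]
  have hx : (0:ℝ) ≤ x ^ n := by positivity
  exact mul_le_mul_of_nonneg_right (cat_le_four_pow n) hx

lemma partial_sum_le {x : ℝ} (h0 : 0 ≤ x) (h : x ≤ 1/4) (N : ℕ) :
    ∑ n ∈ range N, (catalan n : ℝ) * x ^ (n+1) ≤ 1/2 := by
  induction N with
  | zero => simp
  | succ N ih =>
    set P := ∑ n ∈ range N, (catalan n : ℝ) * x ^ (n+1) with hP
    have hPnn : 0 ≤ P := by
      rw [hP]; exact Finset.sum_nonneg fun i _ => by positivity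
    have hkey : ∑ n ∈ range (N+1), (catalan n : ℝ) * x ^ (n+1) ≤ x + P^2 := by
      rw [Finset.sum_range_succ']
      simp only [catalan_zero, Nat.cast_one, zero_add, pow_one, one_mul]
      have hstep : ∑ i ∈ range N, (catalan (i+1) : ℝ) * x ^ (i+1+1) ≤ P^2 := by
        have hterm : ∀ i ∈ range N, (catalan (i+1) : ℝ) * x ^ (i+1+1)
            = ∑ p ∈ Finset.HasAntidiagonal.antidiagonal i,
              ((catalan p.1 : ℝ) * x^(p.1+1)) * ((catalan p.2 : ℝ) * x^(p.2+1)) := by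
          intro i _
          rw [catalan_succ']
          push_cast
          rw [Finset.sum_mul]
          refine Finset.sum_congr rfl fun p hp => ?_
          have hij : p.1 + p.2 = i := Finset.HasAntidiagonal.mem_antidiagonal.mp hp
          have hx : x ^ (p.1+1) * x ^ (p.2+1) = x ^ (i+1+1) := by
            rw [← pow_add]; congr 1; omega
          calc (catalan p.1 : ℝ) * (catalan p.2 : ℝ) * x ^ (i+1+1)
              = (catalan p.1 : ℝ) * (catalan p.2 : ℝ) * (x ^ (p.1+1) * x ^ (p.2+1)) := by
                rw [hx]
            _ = ((catalan p.1 : ℝ) * x^(p.1+1)) * ((catalan p.2 : ℝ) * x^(p.2+1)) := by ring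
        rw [Finset.sum_congr rfl hterm]
        have hdisj : (↑(range N) : Set ℕ).PairwiseDisjoint Finset.HasAntidiagonal.antidiagonal := by
          intro i _ j _ hij
          refine Finset.disjoint_left.mpr fun p hp hq => ?_
          rw [Finset.HasAntidiagonal.mem_antidiagonal] at hp hq
          omega
        rw [← Finset.sum_biUnion hdisj]
        have hsub : (range N).biUnion Finset.HasAntidiagonal.antidiagonal ⊆ range N ×ˢ range N := by
          intro p hp
          rw [Finset.mem_biUnion] at hp
          obtain ⟨m, hm, hpm⟩ := hp
          rw [Finset.HasAntidiagonal.mem_antidiagonal] at hpm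
          rw [Finset.mem_range] at hm
          rw [Finset.mem_product, Finset.mem_range, Finset.mem_range]
          omega
        calc ∑ p ∈ (range N).biUnion Finset.HasAntidiagonal.antidiagonal,
              ((catalan p.1 : ℝ) * x^(p.1+1)) * ((catalan p.2 : ℝ) * x^(p.2+1))
            ≤ ∑ p ∈ range N ×ˢ range N,
              ((catalan p.1 : ℝ) * x^(p.1+1)) * ((catalan p.2 : ℝ) * x^(p.2+1)) :=
              Finset.sum_le_sum_of_subset_of_nonneg hsub (fun p _ _ => by positivity)
          _ = P^2 := by rw [Finset.sum_product, hP, sq, Finset.sum_mul_sum]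
      linarith
    have : x + P^2 ≤ 1/2 := by nlinarith
    linarith

/-- The generating function of the Catalan numbers. -/
noncomputable def catalanGF (x : ℝ) : ℝ := (1 - Real.sqrt (1 - 4 * x)) / (2 * x)

lemma hasSum_catalanGF {x : ℝ} (h0 : 0 < x) (h : x < 1/4) :
    HasSum (fun n => (catalan n : ℝ) * x ^ n) (catalanGF x) := by
  have hsum := cat_summable h0.le h
  set S := ∑' n, (catalan n : ℝ) * x ^ n with hS
  have hHS : HasSum (fun n => (catalan n : ℝ) * x ^ n) S := hsum.hasSum
  -- x * S ≤ 1/2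
  have hsum1 : Summable (fun n => (catalan n : ℝ) * x ^ (n+1)) := by
    have := hsum.mul_left x
    refine this.congr fun n => ?_
    rw [pow_succ]; ring
  have hxS : ∑' n, (catalan n : ℝ) * x ^ (n+1) = x * S := by
    rw [hS, ← tsum_mul_left]
    exact tsum_congr fun n => by rw [pow_succ]; ring
  have hhalf : x * S ≤ 1/2 := by
    rw [← hxS]
    exact Summable.tsum_le_of_sum_range_le hsum1 (partial_sum_le h0.le h.le)
  -- Cauchy product
  have hnorm : Summable fun n => ‖(catalan n : ℝ) * x ^ n‖ := by
    refine hsum.congr fun n => ?_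
    rw [Real.norm_eq_abs, abs_of_nonneg (by positivity)]
  have hcauchy : S * S = ∑' n, ∑ k ∈ Finset.range (n+1),
      ((catalan k : ℝ) * x ^ k) * ((catalan (n-k) : ℝ) * x ^ (n-k)) :=
    tsum_mul_tsum_eq_tsum_sum_range_of_summable_norm hnorm hnorm
  have hinner : ∀ n, ∑ k ∈ Finset.range (n+1),
      ((catalan k : ℝ) * x ^ k) * ((catalan (n-k) : ℝ) * x ^ (n-k))
      = (catalan (n+1) : ℝ) * x ^ n := by
    intro n
    rw [catalan_succ', Finset.Nat.sum_antidiagonal_eq_sum_range_succ_mk]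
    push_cast
    rw [Finset.sum_mul]
    refine Finset.sum_congr rfl fun k hk => ?_
    have hk' : k ≤ n := Nat.lt_succ_iff.mp (Finset.mem_range.mp hk)
    have hx : x ^ k * x ^ (n-k) = x ^ n := by rw [← pow_add]; congr 1; omega
    rw [mul_mul_mul_comm, hx]
  have hshift : ∑' n, (catalan (n+1) : ℝ) * x ^ (n+1) = S - 1 := by
    have h1 := Summable.tsum_eq_zero_add hsum
    simp only [catalan_zero, Nat.cast_one, pow_zero, mul_one, one_mul] at h1
    rw [← hS] at h1
    linarith
  have hquad : x * (S * S) = S - 1 := by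
    rw [hcauchy, tsum_congr hinner, ← tsum_mul_left, ← hshift]
    exact tsum_congr fun n => by rw [pow_succ]; ring
  set s := Real.sqrt (1 - 4*x) with hs
  have hs0 : 0 ≤ s := Real.sqrt_nonneg _
  have hs2 : s ^ 2 = 1 - 4*x := Real.sq_sqrt (by linarith)
  have hkey : 1 - 2*x*S = s := by
    have hsq : (1 - 2*x*S) ^ 2 = s ^ 2 := by rw [hs2]; nlinarith [hquad]
    have h2x : 0 ≤ 1 - 2*x*S := by linarith
    rw [← Real.sqrt_sq h2x, hsq, Real.sqrt_sq hs0]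
  have hval : S = catalanGF x := by
    rw [catalanGF, ← hs]
    field_simp
    linarith
  rw [← hval]
  exact hHS

lemma hasSum_succ_catalanGF {x : ℝ} (h0 : 0 < x) (h : x < 1/4) :
    HasSum (fun n : ℕ => ((n:ℝ)+1) * (catalan n : ℝ) * x ^ n)
      (1 / Real.sqrt (1 - 4*x)) := by
  set r : ℝ := (x + 1/4)/2 with hr
  have hxr : x < r := by rw [hr]; linarith
  have hr4 : r < 1/4 := by rw [hr]; linarith
  have hr0 : 0 < r := by rw [hr]; linarith
  have hu : Summable (fun n : ℕ => ((n:ℝ)+1) * (catalan n : ℝ) * r ^ n) :=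
    succ_cat_summable hr0.le hr4
  have hxt : x ∈ Set.Ioo (-r) r := ⟨by linarith, hxr⟩
  have hderiv : ∀ (n : ℕ) (y : ℝ),
      HasDerivAt (fun z : ℝ => (catalan n : ℝ) * z ^ (n+1))
        (((n:ℝ)+1) * (catalan n : ℝ) * y ^ n) y := by
    intro n y
    have h1 := (hasDerivAt_pow (n+1) y).const_mul (catalan n : ℝ)
    refine h1.congr_deriv ?_
    push_cast
    ring
  have hbound : ∀ (n : ℕ), ∀ y ∈ Set.Ioo (-r) r,
      ‖((n:ℝ)+1) * (catalan n : ℝ) * y ^ n‖ ≤ ((n:ℝ)+1) * (catalan n : ℝ) * r ^ n := by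
    intro n y hy
    rw [norm_mul, norm_pow]
    have h1 : ‖((n:ℝ)+1) * (catalan n : ℝ)‖ = ((n:ℝ)+1) * (catalan n : ℝ) := by
      rw [Real.norm_eq_abs, abs_of_nonneg (by positivity)]
    rw [h1]
    have h2 : ‖y‖ ≤ r := by
      rw [Real.norm_eq_abs, abs_le]
      exact ⟨hy.1.le, hy.2.le⟩
    have h3 : ‖y‖ ^ n ≤ r ^ n := pow_le_pow_left₀ (norm_nonneg y) h2 n
    have h4 : (0:ℝ) ≤ ((n:ℝ)+1) * (catalan n : ℝ) := by positivity
    exact mul_le_mul_of_nonneg_left h3 h4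
  have hg0 : Summable (fun n : ℕ => (catalan n : ℝ) * x ^ (n+1)) := by
    have := (cat_summable h0.le h).mul_left x
    refine this.congr fun n => ?_
    rw [pow_succ]; ring
  have hD : HasDerivAt (fun z : ℝ => ∑' n : ℕ, (catalan n : ℝ) * z ^ (n+1))
      (∑' n : ℕ, ((n:ℝ)+1) * (catalan n : ℝ) * x ^ n) x :=
    hasDerivAt_tsum_of_isPreconnected hu isOpen_Ioo (convex_Ioo _ _).isPreconnected
      (fun n y _ => hderiv n y) hbound hxt hg0 hxt
  -- the tsum equals the closed form near x
  have heq : (fun z : ℝ => (1 - Real.sqrt (1 - 4*z))/2)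
      =ᶠ[nhds x] (fun z : ℝ => ∑' n : ℕ, (catalan n : ℝ) * z ^ (n+1)) := by
    have hmem : Set.Ioo (0:ℝ) (1/4) ∈ nhds x := by
      exact isOpen_Ioo.mem_nhds ⟨h0, h⟩
    filter_upwards [hmem] with y hy
    have hy0 : 0 < y := hy.1
    have hy4 : y < 1/4 := hy.2
    have hHS := (hasSum_catalanGF hy0 hy4).mul_left y
    have hHS' : HasSum (fun n : ℕ => (catalan n : ℝ) * y ^ (n+1))
        (y * catalanGF y) := by
      refine hHS.congr_fun fun n => ?_
      rw [pow_succ]; ring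
    rw [hHS'.tsum_eq, catalanGF]
    have hy0' : (2:ℝ) * y ≠ 0 := by positivity
    field_simp
  have hg : HasDerivAt (fun z : ℝ => (1 - Real.sqrt (1 - 4*z))/2)
      (1 / Real.sqrt (1 - 4*x)) x := by
    have h1 : HasDerivAt (fun z : ℝ => 1 - 4*z) (-4) x := by
      simpa using ((hasDerivAt_id x).const_mul (4:ℝ)).const_sub 1
    have hne : 1 - 4*x ≠ 0 := by linarith
    have h2 : HasDerivAt (fun z : ℝ => Real.sqrt (1 - 4*z))
        (1 / (2 * Real.sqrt (1 - 4*x)) * (-4)) x :=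
      (Real.hasDerivAt_sqrt hne).comp x h1
    have h3 := (h2.const_sub 1).div_const 2
    refine h3.congr_deriv ?_
    have hspos : 0 < Real.sqrt (1 - 4*x) := Real.sqrt_pos.mpr (by linarith)
    field_simp
    ring
  have huniq := (hD.congr_of_eventuallyEq heq).unique hg
  rw [← huniq]
  exact (succ_cat_summable h0.le h).hasSum

theorem efsm_expected_revenue (p q γ : ℝ) (hpq : p + q = 1)
    (hq0 : 0 < q) (hq : q < 1/2) (hγ0 : 0 < γ) (hγ1 : γ ≤ 1) :
    HasSum (fun n : ℕ => p * (p * q) ^ n * (catalan n : ℝ) *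
        (((n : ℝ) + 1) - (1 - (1 - γ) ^ (n + 1)) / γ))
      (q / (p - q) - ((1 - γ) / γ) * (1 - p * catalanGF ((1 - γ) * p * q))) := by
  have hp1 : p = 1 - q := by linarith
  have hp0 : 0 < p := by rw [hp1]; linarith
  have hpq0 : 0 < p * q := mul_pos hp0 hq0
  have hpq4 : p * q < 1/4 := by nlinarith
  have hd0 : 0 < p - q := by rw [hp1]; linarith
  -- sqrt(1 - 4pq) = p - q
  have hsqrt : Real.sqrt (1 - 4*(p*q)) = p - q := by
    have h1 : 1 - 4*(p*q) = (p - q)^2 := by nlinarith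
    rw [h1, Real.sqrt_sq hd0.le]
  have h2 : HasSum (fun n : ℕ => ((n:ℝ)+1) * (catalan n : ℝ) * (p*q) ^ n)
      (1/(p-q)) := by
    have := hasSum_succ_catalanGF hpq0 hpq4
    rwa [hsqrt] at this
  have h1a : HasSum (fun n : ℕ => (catalan n : ℝ) * (p*q) ^ n) (1/p) := by
    have hgf := hasSum_catalanGF hpq0 hpq4
    have : catalanGF (p*q) = 1/p := by
      rw [catalanGF, hsqrt]
      have h2q : 1 - (p - q) = 2*q := by linarith
      rw [h2q]
      field_simp
    rwa [this] at hgf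
  have h3 : HasSum (fun n : ℕ => (p*(1-γ)/γ) * ((catalan n : ℝ) * ((1-γ)*p*q) ^ n))
      ((p*(1-γ)/γ) * catalanGF ((1-γ)*p*q)) := by
    rcases eq_or_lt_of_le hγ1 with hγe | hγlt
    · have hz : p*(1-γ)/γ = 0 := by rw [← hγe]; simp
      simp only [hz, zero_mul]
      exact hasSum_zero
    · have hγ' : 0 < 1 - γ := by linarith
      have hx0 : 0 < (1-γ)*p*q := by positivity
      have hx4 : (1-γ)*p*q < 1/4 := by
        have : (1-γ)*p*q ≤ p*q := by nlinarith
        linarith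
      have := (hasSum_catalanGF hx0 hx4).mul_left (p*(1-γ)/γ)
      exact this
  have hcomb := ((h2.mul_left p).sub (h1a.mul_left (p/γ))).add h3
  have hfun : ∀ n : ℕ,
      (p * (((n:ℝ)+1) * (catalan n : ℝ) * (p*q) ^ n)
        - (p/γ) * ((catalan n : ℝ) * (p*q) ^ n))
        + (p*(1-γ)/γ) * ((catalan n : ℝ) * ((1-γ)*p*q) ^ n)
      = p * (p * q) ^ n * (catalan n : ℝ) *
        (((n : ℝ) + 1) - (1 - (1 - γ) ^ (n + 1)) / γ) := by
    intro n
    have he : ((1-γ)*p*q) ^ n = (1-γ)^n * (p*q) ^ n := by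
      rw [mul_assoc, mul_pow]
    have hs : (1-γ) ^ (n+1) = (1-γ)^n * (1-γ) := pow_succ _ _
    rw [he, hs]
    field_simp
    ring
  have hval : (p * (1/(p-q)) - (p/γ) * (1/p))
      + (p*(1-γ)/γ) * catalanGF ((1-γ)*p*q)
      = q / (p - q) - ((1 - γ) / γ) * (1 - p * catalanGF ((1 - γ) * p * q)) := by
    field_simp
    ring
  rw [← hval]
  exact hcomb.congr_fun fun n => (hfun n).symm
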